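/- For the multicalibration boosting update with adaptive rescaling, the rescaling weight is nonnegative after the first step: if f = (⟨y, φ₀⟩ / ‖φ₀‖₂²) φ₀ for some nonzero vector φ₀ ∈ ℝ^n (i.e., f is the orthogonal projection of y onto the line spanned by φ₀), then the next update direction φ(f) = f + η A(f)(y − f) satisfies ⟨y, φ(f)⟩ ≥ 0; in particular, whenever φ(f) ≠ 0, the adaptive weight ω(f) = ⟨y, φ(f)⟩ / ‖φ(f)‖₂² is nonnegative. -/

import Mathlib

open Matrix
open scoped RealInnerProductSpace

/-- The action of a real matrix on vectors of `EuclideanSpace`. -/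
noncomputable def mulVecE {m n : Type*} [Fintype m] [Fintype n] [DecidableEq n]
    (A : Matrix m n ℝ) (v : EuclideanSpace ℝ n) : EuclideanSpace ℝ m :=
  Matrix.toEuclideanLin A v

lemma mulVecE_symm {n : Type*} [Fintype n] [DecidableEq n] {M : Matrix n n ℝ}
    (hM : Mᵀ = M) (v w : EuclideanSpace ℝ n) :
    ⟪mulVecE M v, w⟫ = ⟪v, mulVecE M w⟫ := by
  have hH : M.IsHermitian := by
    rw [Matrix.IsHermitian, Matrix.conjTranspose]
    ext i j
    simpa using congrFun (congrFun hM i) j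
  exact (Matrix.isHermitian_iff_isSymmetric.mp hH) v w

lemma mulVecE_idem {n : Type*} [Fintype n] [DecidableEq n] {M : Matrix n n ℝ}
    (hM : M * M = M) (v : EuclideanSpace ℝ n) :
    mulVecE M (mulVecE M v) = mulVecE M v := by
  simp only [mulVecE, Matrix.toEuclideanLin_apply, Equiv.apply_symm_apply,
    Matrix.mulVec_mulVec, hM]

/-- **Nonnegativity of the adaptive rescaling weight after the first step.**
If `f = (⟨y, φ₀⟩/‖φ₀‖₂²) φ₀` for some nonzero `φ₀` (the projection of `y` onto the line
spanned by `φ₀`), then `φ(f) = f + η A(f)(y - f)` satisfies `⟨y, φ(f)⟩ ≥ 0`; in particular,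
whenever `φ(f) ≠ 0`, the adaptive weight `ω(f) = ⟨y, φ(f)⟩/‖φ(f)‖₂²` is nonnegative. -/
theorem adaptive_rescaling_weight_nonneg
    {n : ℕ} (y : EuclideanSpace ℝ (Fin n)) (η : ℝ) (hη0 : 0 < η) (hη1 : η ≤ 1)
    (A : EuclideanSpace ℝ (Fin n) → Matrix (Fin n) (Fin n) ℝ)
    (hAsymm : ∀ f, (A f)ᵀ = A f) (hAproj : ∀ f, A f * A f = A f)
    (φ₀ : EuclideanSpace ℝ (Fin n)) (hφ₀ : φ₀ ≠ 0)
    (f φ : EuclideanSpace ℝ (Fin n))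
    (hfdef : f = (⟪y, φ₀⟫ / ‖φ₀‖ ^ 2) • φ₀)
    (hφ : φ = f + η • mulVecE (A f) (y - f)) :
    0 ≤ ⟪y, φ⟫ ∧ (φ ≠ 0 → 0 ≤ ⟪y, φ⟫ / ‖φ‖ ^ 2) := by
  set g : EuclideanSpace ℝ (Fin n) := mulVecE (A f) (y - f) with hg
  -- ⟪y, f⟫ = ‖f‖²
  have hφ₀norm : (0:ℝ) < ‖φ₀‖ ^ 2 := by
    have := norm_pos_iff.mpr hφ₀
    positivity
  have hyf : ⟪y, f⟫ = ‖f‖ ^ 2 := by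
    rw [hfdef, real_inner_smul_right, norm_smul, mul_pow, Real.norm_eq_abs, sq_abs,
      ← real_inner_self_eq_norm_sq φ₀, real_inner_self_eq_norm_sq]
    field_simp
  -- ⟪y - f, g⟫ = ‖g‖²
  have hg2 : ⟪y - f, g⟫ = ‖g‖ ^ 2 := by
    rw [← real_inner_self_eq_norm_sq]
    calc ⟪y - f, g⟫ = ⟪y - f, mulVecE (A f) (mulVecE (A f) (y - f))⟫ := by
          rw [mulVecE_idem (hAproj f)]
      _ = ⟪mulVecE (A f) (y - f), mulVecE (A f) (y - f)⟫ :=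
          (mulVecE_symm (hAsymm f) _ _).symm
      _ = ⟪g, g⟫ := rfl
  have hfg : |⟪f, g⟫| ≤ ‖f‖ * ‖g‖ := abs_real_inner_le_norm f g
  have hkey : 0 ≤ ⟪y, φ⟫ := by
    have : ⟪y, φ⟫ = ‖f‖^2 + η * ⟪f, g⟫ + η * ‖g‖^2 := by
      rw [hφ, inner_add_right, real_inner_smul_right, hyf]
      have : ⟪y, g⟫ = ⟪f, g⟫ + ⟪y - f, g⟫ := by
        rw [← inner_add_left]
        congr 1
        abel
      rw [this, hg2]; ring
    rw [this]
    have h1 : -(‖f‖ * ‖g‖) ≤ ⟪f, g⟫ := neg_le_of_abs_le hfg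
    nlinarith [sq_nonneg (‖f‖ - ‖g‖), sq_nonneg ‖f‖, sq_nonneg ‖g‖,
      mul_nonneg (norm_nonneg f) (norm_nonneg g), sq_nonneg (‖f‖ - η * ‖g‖)]
  exact ⟨hkey, fun _ => div_nonneg hkey (by positivity)⟩
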